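/- Fix pairwise distinct points x_1, …, x_m ∈ ℝ^d, an index i ∈ {1,…,m}, and a point y ∈ ℝ^d. Then there exist parameters η ∈ ℝ, W ∈ ℝ^{d×3}, U ∈ ℝ^{3×d}, b ∈ ℝ^3 of a feed-forward layer FF of width d' = 3 such that FF(x_i) = y and FF(x_j) = x_j for all j ≠ i. -/

import Mathlib

open Filter Topology Matrix

/-- The solution set of a nontrivial affine equation in one real variable is finite. -/
lemma affine_zero_set_finite (c e : ℝ) (h : e ≠ 0 ∨ c ≠ 0) :
    {ε : ℝ | c + ε * e = 0}.Finite := by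
  rcases h with h | h
  · apply Set.Finite.subset (Set.finite_singleton (-c / e))
    intro ε hε
    simp only [Set.mem_setOf_eq] at hε
    simp only [Set.mem_singleton_iff]
    field_simp
    linarith
  · by_cases he : e = 0
    · apply Set.Finite.subset (Set.finite_empty)
      intro ε hε
      simp only [Set.mem_setOf_eq, he, mul_zero, add_zero] at hε
      exact absurd hε h
    · apply Set.Finite.subset (Set.finite_singleton (-c / e))
      intro ε hε
      simp only [Set.mem_setOf_eq] at hε
      simp only [Set.mem_singleton_iff]
      field_simp
      linarith

/-- There is a linear functional not vanishing on any of finitely many nonzero vectors. -/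
lemma exists_separating {d : ℕ} {ι : Type*} [DecidableEq ι] (s : Finset ι)
    (v : ι → (Fin d → ℝ)) (hv : ∀ k ∈ s, v k ≠ 0) :
    ∃ a : Fin d → ℝ, ∀ k ∈ s, a ⬝ᵥ v k ≠ 0 := by
  classical
  induction s using Finset.induction_on with
  | empty => exact ⟨0, fun k hk => absurd hk (Finset.notMem_empty k)⟩
  | @insert k₀ s hk₀ ih =>
    obtain ⟨a, ha⟩ := ih (fun k hk => hv k (Finset.mem_insert_of_mem hk))
    set w := v k₀ with hw
    have hwz : w ≠ 0 := hv k₀ (Finset.mem_insert_self _ _)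
    have hww : w ⬝ᵥ w ≠ 0 := fun h => hwz (dotProduct_self_eq_zero.mp h)
    -- bad set of ε for each vector
    have hbad : ∀ k ∈ insert k₀ s, {ε : ℝ | (a ⬝ᵥ v k) + ε * (w ⬝ᵥ v k) = 0}.Finite := by
      intro k hk
      rcases Finset.mem_insert.mp hk with rfl | hk
      · exact affine_zero_set_finite _ _ (Or.inl hww)
      · exact affine_zero_set_finite _ _ (Or.inr (ha k hk))
    have hfin : (⋃ k ∈ (insert k₀ s : Finset ι),
        {ε : ℝ | (a ⬝ᵥ v k) + ε * (w ⬝ᵥ v k) = 0}).Finite :=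
      Set.Finite.biUnion (Finset.finite_toSet _) (fun k hk => hbad k hk)
    obtain ⟨ε, hε⟩ := hfin.infinite_compl.nonempty
    refine ⟨a + ε • w, ?_⟩
    intro k hk
    have : ε ∉ {ε : ℝ | (a ⬝ᵥ v k) + ε * (w ⬝ᵥ v k) = 0} := by
      intro hmem
      exact hε (Set.mem_iUnion₂.mpr ⟨k, hk, hmem⟩)
    simp only [Set.mem_setOf_eq] at this
    rw [add_dotProduct, smul_dotProduct]
    simpa [smul_eq_mul] using this

/-- Feed-forward layer of width `d'`: `FF(x) = η x + W σ(U x + b)` with componentwise ReLU. -/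
noncomputable def FF {d d' : ℕ} (η : ℝ) (W : Matrix (Fin d) (Fin d') ℝ)
    (U : Matrix (Fin d') (Fin d) ℝ) (b : Fin d' → ℝ) (x : Fin d → ℝ) : Fin d → ℝ :=
  η • x + W.mulVec fun k => max 0 (U.mulVec x k + b k)

/-- **"Hat function" feed-forward layer.** A feed-forward layer of width 3 can move exactly
one of finitely many pairwise distinct points to an arbitrary target, keeping the rest fixed. -/
theorem hat_feed_forward {d m : ℕ} (x : Fin m → (Fin d → ℝ))
    (hinj : Function.Injective x) (i : Fin m) (y : Fin d → ℝ) :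
    ∃ (η : ℝ) (W : Matrix (Fin d) (Fin 3) ℝ) (U : Matrix (Fin 3) (Fin d) ℝ) (b : Fin 3 → ℝ),
      FF η W U b (x i) = y ∧ ∀ j, j ≠ i → FF η W U b (x j) = x j := by
  classical
  -- a separating direction
  obtain ⟨a, ha⟩ := exists_separating (Finset.univ.erase i) (fun j => x j - x i)
    (fun j hj => sub_ne_zero.mpr (fun h => (Finset.mem_erase.mp hj).1 (hinj h)))
  set t : Fin m → ℝ := fun j => a ⬝ᵥ x j with ht
  have htne : ∀ j, j ≠ i → t j - t i ≠ 0 := by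
    intro j hj
    have := ha j (Finset.mem_erase.mpr ⟨hj, Finset.mem_univ j⟩)
    rwa [dotProduct_sub] at this
  -- a gap δ
  set F : Finset ℝ := insert 1 ((Finset.univ.erase i).image fun j => |t j - t i|) with hF
  have hFne : F.Nonempty := ⟨1, Finset.mem_insert_self _ _⟩
  set δ : ℝ := F.min' hFne with hδ
  have hδpos : 0 < δ := by
    apply (Finset.lt_min'_iff F hFne).mpr
    intro z hz
    rcases Finset.mem_insert.mp hz with rfl | hz
    · norm_num
    · obtain ⟨j, hj, rfl⟩ := Finset.mem_image.mp hz
      exact abs_pos.mpr (htne j (Finset.mem_erase.mp hj).1)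
  have hδle : ∀ j, j ≠ i → δ ≤ |t j - t i| := by
    intro j hj
    exact Finset.min'_le F _ (Finset.mem_insert_of_mem
      (Finset.mem_image.mpr ⟨j, Finset.mem_erase.mpr ⟨hj, Finset.mem_univ j⟩, rfl⟩))
  -- the layer
  refine ⟨1, fun p k => (y p - x i p) / δ * ![1, -2, 1] k, fun _ p => a p,
    ![δ - t i, -t i, -δ - t i], ?_, ?_⟩
  · funext p
    have hs : ∑ q : Fin d, a q * x i q = t i := rfl
    simp only [FF, Pi.add_apply, Pi.smul_apply, one_smul, Matrix.mulVec, dotProduct,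
      Fin.sum_univ_three]
    simp only [Matrix.cons_val_zero, Matrix.cons_val_one, Matrix.head_cons,
      Matrix.cons_val_two, Matrix.tail_cons]
    rw [hs, show t i + (δ - t i) = δ by ring, show t i + -t i = 0 by ring,
      show t i + (-δ - t i) = -δ by ring]
    rw [max_eq_right hδpos.le, max_self, max_eq_left (by linarith)]
    field_simp
    ring
  · intro j hj
    funext p
    have hs : ∑ q : Fin d, a q * x j q = t j := rfl
    have hgap := hδle j hj
    simp only [FF, Pi.add_apply, Pi.smul_apply, one_smul, Matrix.mulVec, dotProduct,
      Fin.sum_univ_three]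
    simp only [Matrix.cons_val_zero, Matrix.cons_val_one, Matrix.head_cons,
      Matrix.cons_val_two, Matrix.tail_cons]
    rw [hs]
    rcases le_abs.mp hgap with h | h
    · -- t j - t i ≥ δ
      rw [max_eq_right (by linarith), max_eq_right (by linarith), max_eq_right (by linarith)]
      ring
    · -- t j - t i ≤ -δ
      rw [max_eq_left (by linarith), max_eq_left (by linarith), max_eq_left (by linarith)]
      ring
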